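/- For the 3-Lie algebra A_\omega^\delta with basis {L_r, M_r : r \in \mathbb{Z}} and bracket [L_r, L_s, M_t] = (s-r)L_{r+s-t}, [L_r, M_s, M_t] = (t-s)M_{s+t-r}, define for nonzero r: q_r = (1/r)(ad(L_0, M_{-r}) - ad(L_r, M_0)), x_r = (1/r) ad(L_r, L_0), z_r = (-1/r) ad(M_{-r}, M_0); and q_0 = ad(L_0,M_0) - ad(L_1,M_1), x_0 = (1/2) ad(L_1, L_{-1}), z_0 = (1/2) ad(M_1, M_{-1}). Then as operators on A: [q_r, q_s] = 0, [x_r, x_s] = 0, [z_r, z_s] = 0, [q_r, x_s] = -2 x_{r+s}, [q_r, z_s] = 2 z_{r+s}, and [z_r, x_s] = q_{r+s}, for all r, s \in \mathbb{Z}. Hence the span of {q_r, x_r, z_r : r \in \mathbb{Z}} is a Lie subalgebra of gl(A) isomorphic to sl(2, F) \otimes F[t, t^{-1}]. -/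

import Mathlib

noncomputable section

/-- Trilinearity of a ternary bracket. -/
def IsTrilinear (F : Type) {V : Type} [Field F] [AddCommGroup V] [Module F V]
    (br : V → V → V → V) : Prop :=
  (∀ (a : F) (u u' v w : V), br (a • u + u') v w = a • br u v w + br u' v w) ∧
  (∀ (a : F) (u v v' w : V), br u (a • v + v') w = a • br u v w + br u v' w) ∧
  (∀ (a : F) (u v w w' : V), br u v (a • w + w') = a • br u v w + br u v w')

/-- Total skew-symmetry of a ternary bracket. -/
def IsSkew {V : Type} [AddCommGroup V] (br : V → V → V → V) : Prop :=
  ∀ u v w : V, br u v w = - br v u w ∧ br u v w = - br u w v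

/-- The generalized Jacobi (Filippov) identity. -/
def Jacobi {V : Type} [AddCommGroup V] (br : V → V → V → V) : Prop :=
  ∀ u1 u2 u3 v2 v3 : V, br (br u1 u2 u3) v2 v3 =
    br (br u1 v2 v3) u2 u3 + br u1 (br u2 v2 v3) u3 + br u1 u2 (br u3 v2 v3)

/-- The vector space with basis `{L_r, M_r : r ∈ ℤ}`. -/
abbrev A (F : Type) [Field F] : Type := (ℤ ⊕ ℤ) →₀ F

/-- The basis vector `L_r`. -/
def Lb (F : Type) [Field F] (r : ℤ) : A F := Finsupp.single (Sum.inl r) 1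

/-- The basis vector `M_r`. -/
def Mb (F : Type) [Field F] (r : ℤ) : A F := Finsupp.single (Sum.inr r) 1

/-- The defining relations of the 3-Lie algebra `A_ω^δ` on basis elements. -/
def AwdBracket {F : Type} [Field F] (br : A F → A F → A F → A F) : Prop :=
  (∀ r s t : ℤ, br (Lb F r) (Lb F s) (Mb F t) = ((s : F) - (r : F)) • Lb F (r + s - t)) ∧
  (∀ r s t : ℤ, br (Lb F r) (Mb F s) (Mb F t) = ((t : F) - (s : F)) • Mb F (s + t - r)) ∧
  (∀ r s t : ℤ, br (Lb F r) (Lb F s) (Lb F t) = 0) ∧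
  (∀ r s t : ℤ, br (Mb F r) (Mb F s) (Mb F t) = 0)

/-- the inner derivations `q_r, x_r, z_r` of `A_ω^δ` satisfy the
relations of the loop algebra `sl(2,F) ⊗ F[t,t⁻¹]`. -/
theorem stmt16 (F : Type) [Field F] [CharZero F]
    (br : A F → A F → A F → A F)
    (htri : IsTrilinear F br) (hskew : IsSkew br) (hjac : Jacobi br)
    (hAwd : AwdBracket br)
    (q x z : ℤ → A F →ₗ[F] A F)
    (hq0 : ∀ w : A F, q 0 w = br (Lb F 0) (Mb F 0) w - br (Lb F 1) (Mb F 1) w)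
    (hqr : ∀ r : ℤ, r ≠ 0 → ∀ w : A F,
      q r w = (r : F)⁻¹ • (br (Lb F 0) (Mb F (-r)) w - br (Lb F r) (Mb F 0) w))
    (hx0 : ∀ w : A F, x 0 w = (2 : F)⁻¹ • br (Lb F 1) (Lb F (-1)) w)
    (hxr : ∀ r : ℤ, r ≠ 0 → ∀ w : A F, x r w = (r : F)⁻¹ • br (Lb F r) (Lb F 0) w)
    (hz0 : ∀ w : A F, z 0 w = (2 : F)⁻¹ • br (Mb F 1) (Mb F (-1)) w)
    (hzr : ∀ r : ℤ, r ≠ 0 → ∀ w : A F,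
      z r w = (-(r : F)⁻¹) • br (Mb F (-r)) (Mb F 0) w) :
    ∀ r s : ℤ,
      (q r ∘ₗ q s - q s ∘ₗ q r = 0) ∧
      (x r ∘ₗ x s - x s ∘ₗ x r = 0) ∧
      (z r ∘ₗ z s - z s ∘ₗ z r = 0) ∧
      (q r ∘ₗ x s - x s ∘ₗ q r = (-2 : F) • x (r + s)) ∧
      (q r ∘ₗ z s - z s ∘ₗ q r = (2 : F) • z (r + s)) ∧
      (z r ∘ₗ x s - x s ∘ₗ z r = q (r + s)) := by
  obtain ⟨hLLM, hLMM, hLLL, hMMM⟩ := hAwd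
  have sk1 : ∀ u v w : A F, br u v w = -br v u w := fun u v w => (hskew u v w).1
  have sk2 : ∀ u v w : A F, br u v w = -br u w v := fun u v w => (hskew u v w).2
  -- derived bracket formulas
  have hLML : ∀ r s t : ℤ, br (Lb F r) (Mb F s) (Lb F t)
      = -(((t : F) - (r : F)) • Lb F (r + t - s)) := by
    intro r s t; rw [sk2, hLLM]
  have hLMM' := hLMM
  have hMML : ∀ r s t : ℤ, br (Mb F r) (Mb F s) (Lb F t)
      = ((s : F) - (r : F)) • Mb F (r + s - t) := by
    intro r s t
    rw [sk2, sk1, neg_neg, hLMM]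
  -- nonzero casts
  have hc : ∀ r : ℤ, r ≠ 0 → ((r : F) ≠ 0) := fun r h => Int.cast_ne_zero.mpr h
  -- values on basis
  have qL : ∀ r t : ℤ, q r (Lb F t) = -Lb F (t + r) := by
    intro r t
    rcases eq_or_ne r 0 with h | h
    · subst h
      rw [hq0, hLML 0 0 t, hLML 1 1 t]
      push_cast
      ring_nf
      module
    · rw [hqr r h, hLML 0 (-r) t, hLML r 0 t]
      have hr := hc r h
      push_cast
      ring_nf
      match_scalars <;> field_simp <;> ring
  have qM : ∀ r t : ℤ, q r (Mb F t) = Mb F (t - r) := by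
    intro r t
    rcases eq_or_ne r 0 with h | h
    · subst h
      rw [hq0, hLMM 0 0 t, hLMM 1 1 t]
      push_cast
      ring_nf
      module
    · rw [hqr r h, hLMM 0 (-r) t, hLMM r 0 t]
      have hr := hc r h
      push_cast
      ring_nf
      match_scalars <;> field_simp <;> ring
  have xL : ∀ r t : ℤ, x r (Lb F t) = 0 := by
    intro r t
    rcases eq_or_ne r 0 with h | h
    · subst h; rw [hx0, hLLL, smul_zero]
    · rw [hxr r h, hLLL, smul_zero]
  have xM : ∀ r t : ℤ, x r (Mb F t) = -Lb F (r - t) := by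
    intro r t
    rcases eq_or_ne r 0 with h | h
    · subst h
      rw [hx0, hLLM 1 (-1) t]
      push_cast
      ring_nf
      match_scalars <;> field_simp
    · rw [hxr r h, hLLM r 0 t]
      have hr := hc r h
      push_cast
      ring_nf
      match_scalars <;> field_simp
  have zL : ∀ r t : ℤ, z r (Lb F t) = -Mb F (-r - t) := by
    intro r t
    rcases eq_or_ne r 0 with h | h
    · subst h
      rw [hz0, hMML 1 (-1) t]
      push_cast
      ring_nf
      match_scalars <;> field_simp
    · rw [hzr r h, hMML (-r) 0 t]
      have hr := hc r h
      push_cast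
      ring_nf
      match_scalars <;> field_simp
  have zM : ∀ r t : ℤ, z r (Mb F t) = 0 := by
    intro r t
    rcases eq_or_ne r 0 with h | h
    · subst h; rw [hz0, hMMM, smul_zero]
    · rw [hzr r h, hMMM, smul_zero]
  -- extensionality principle
  have key : ∀ f g : A F →ₗ[F] A F, (∀ n : ℤ, f (Lb F n) = g (Lb F n)) →
      (∀ n : ℤ, f (Mb F n) = g (Mb F n)) → f = g := by
    intro f g hL hM
    apply Finsupp.lhom_ext
    intro a b
    have hb : (Finsupp.single a b : A F) = b • Finsupp.single a 1 := by
      rw [Finsupp.smul_single, smul_eq_mul, mul_one]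
    rw [hb, map_smul, map_smul]
    cases a with
    | inl n => rw [show (Finsupp.single (Sum.inl n) 1 : A F) = Lb F n from rfl, hL n]
    | inr n => rw [show (Finsupp.single (Sum.inr n) 1 : A F) = Mb F n from rfl, hM n]
  intro r s
  refine ⟨?_, ?_, ?_, ?_, ?_, ?_⟩
  · apply key <;> intro n <;>
      simp only [LinearMap.sub_apply, LinearMap.comp_apply, LinearMap.zero_apply, map_neg,
        map_zero, qL, qM] <;> ring_nf <;> module
  · apply key <;> intro n <;>
      simp only [LinearMap.sub_apply, LinearMap.comp_apply, LinearMap.zero_apply, map_neg,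
        map_zero, xL, xM, neg_neg, sub_self]
  · apply key <;> intro n <;>
      simp only [LinearMap.sub_apply, LinearMap.comp_apply, LinearMap.zero_apply, map_neg,
        map_zero, zL, zM, neg_neg, sub_self]
  · apply key <;> intro n <;>
      simp only [LinearMap.sub_apply, LinearMap.comp_apply, LinearMap.smul_apply, map_neg,
        map_zero, map_smul, qL, qM, xL, xM, zL, zM] <;> ring_nf <;> module
  · apply key <;> intro n <;>
      simp only [LinearMap.sub_apply, LinearMap.comp_apply, LinearMap.smul_apply, map_neg,
        map_zero, map_smul, qL, qM, xL, xM, zL, zM] <;> ring_nf <;> module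
  · apply key <;> intro n <;>
      simp only [LinearMap.sub_apply, LinearMap.comp_apply, map_neg, map_zero,
        qL, qM, xL, xM, zL, zM] <;> ring_nf <;> module
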